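/- arXiv:quant-ph/0403164 — 3 statements merged into one kernel-verified Lean document; each statement's English description precedes it below -/
import Mathlib

section
/- Let ε > 0, t ∈ ℕ, and let U, U' be unitary operators on a Hilbert space H with ‖U − U'‖ ≤ ε. Let P, Q be orthogonal projections on H and let v ∈ H with ‖v‖ = 1. Define p = ‖Q(UP)^t v‖² and p' = ‖Q(U'P)^t v‖². Then |p − p'| ≤ 2tε. -/
open ContinuousLinearMap in
lemma proj_norm_le {H : Type*} [NormedAddCommGroup H] [InnerProductSpace ℂ H]
    [FiniteDimensional ℂ H] (P : H →L[ℂ] H)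
    (hP : IsSelfAdjoint P) (hPi : P ∘L P = P) (x : H) : ‖P x‖ ≤ ‖x‖ := by
  rcases eq_or_ne (P x) 0 with h | h
  · simp [h, norm_nonneg]
  · have hPP : P (P x) = P x := by
      conv_lhs => rw [← ContinuousLinearMap.comp_apply, hPi]
    have h1 : ‖P x‖ ^ 2 = (inner ℂ (P x) (P x) : ℂ).re :=
      InnerProductSpace.norm_sq_eq_re_inner (𝕜 := ℂ) _
    have h2 : (inner ℂ (P x) (P x) : ℂ) = inner ℂ x (P x) := by
      calc (inner ℂ (P x) (P x) : ℂ) = inner ℂ x ((ContinuousLinearMap.adjoint P) (P x)) := by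
            rw [ContinuousLinearMap.adjoint_inner_right]
        _ = inner ℂ x (P (P x)) := by rw [hP.adjoint_eq]
        _ = inner ℂ x (P x) := by rw [hPP]
    have h3 : ‖P x‖ ^ 2 ≤ ‖x‖ * ‖P x‖ := by
      rw [h1, h2]
      calc (inner ℂ x (P x) : ℂ).re ≤ ‖(inner ℂ x (P x) : ℂ)‖ := Complex.re_le_norm _
        _ ≤ ‖x‖ * ‖P x‖ := norm_inner_le_norm x (P x)
    have hpos : 0 < ‖P x‖ := norm_pos_iff.mpr h
    nlinarith

/-- If `U, U'` are unitaries with `‖U - U'‖ ≤ ε`, `P, Q` orthogonal projections,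
and `v` a unit vector, then the acceptance probabilities
`p = ‖Q (UP)^t v‖²` and `p' = ‖Q (U'P)^t v‖²` satisfy `|p - p'| ≤ 2tε`. -/
theorem stmt_1 {H : Type*} [NormedAddCommGroup H] [InnerProductSpace ℂ H]
    [FiniteDimensional ℂ H]
    (ε : ℝ) (hε : 0 < ε) (t : ℕ)
    (U U' : H →L[ℂ] H) (hU : U ∈ unitary (H →L[ℂ] H)) (hU' : U' ∈ unitary (H →L[ℂ] H))
    (hUU' : ‖U - U'‖ ≤ ε)
    (P Q : H →L[ℂ] H)
    (hP : IsSelfAdjoint P) (hPi : P ∘L P = P)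
    (hQ : IsSelfAdjoint Q) (hQi : Q ∘L Q = Q)
    (v : H) (hv : ‖v‖ = 1) :
    |‖Q (((U ∘L P) ^ t) v)‖ ^ 2 - ‖Q (((U' ∘L P) ^ t) v)‖ ^ 2| ≤ 2 * t * ε := by
  -- contraction properties
  have hnUP : ∀ x : H, ‖(U ∘L P) x‖ ≤ ‖x‖ := fun x => by
    rw [ContinuousLinearMap.comp_apply, U.norm_map_of_mem_unitary hU]
    exact proj_norm_le P hP hPi x
  have hnU'P : ∀ x : H, ‖(U' ∘L P) x‖ ≤ ‖x‖ := fun x => by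
    rw [ContinuousLinearMap.comp_apply, U'.norm_map_of_mem_unitary hU']
    exact proj_norm_le P hP hPi x
  have hdiff : ∀ x : H, ‖(U ∘L P) x - (U' ∘L P) x‖ ≤ ε * ‖x‖ := fun x => by
    have : (U ∘L P) x - (U' ∘L P) x = (U - U') (P x) := by
      simp [ContinuousLinearMap.sub_apply]
    rw [this]
    calc ‖(U - U') (P x)‖ ≤ ‖U - U'‖ * ‖P x‖ := (U - U').le_opNorm _
      _ ≤ ε * ‖x‖ := by
          apply mul_le_mul hUU' (proj_norm_le P hP hPi x) (norm_nonneg _) hε.le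
  -- powers contract
  have hpow : ∀ n : ℕ, ∀ x : H, ‖((U' ∘L P) ^ n) x‖ ≤ ‖x‖ := by
    intro n
    induction n with
    | zero => simp
    | succ n ih =>
      intro x
      rw [pow_succ, ContinuousLinearMap.mul_apply]
      exact le_trans (ih _) (hnU'P x)
  -- telescoping bound
  have key : ∀ n : ℕ, ∀ x : H, ‖((U ∘L P) ^ n) x - ((U' ∘L P) ^ n) x‖ ≤ n * ε * ‖x‖ := by
    intro n
    induction n with
    | zero => simp
    | succ n ih =>
      intro x
      have h1 : ((U ∘L P) ^ (n+1)) x - ((U' ∘L P) ^ (n+1)) x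
          = (U ∘L P) (((U ∘L P) ^ n) x - ((U' ∘L P) ^ n) x)
            + ((U ∘L P) (((U' ∘L P) ^ n) x) - (U' ∘L P) (((U' ∘L P) ^ n) x)) := by
        rw [pow_succ', pow_succ']
        simp only [ContinuousLinearMap.mul_apply, map_sub]
        abel
      rw [h1]
      calc ‖_ + _‖ ≤ ‖(U ∘L P) (((U ∘L P) ^ n) x - ((U' ∘L P) ^ n) x)‖
            + ‖(U ∘L P) (((U' ∘L P) ^ n) x) - (U' ∘L P) (((U' ∘L P) ^ n) x)‖ := norm_add_le _ _
        _ ≤ ‖((U ∘L P) ^ n) x - ((U' ∘L P) ^ n) x‖ + ε * ‖((U' ∘L P) ^ n) x‖ :=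
            add_le_add (hnUP _) (hdiff _)
        _ ≤ n * ε * ‖x‖ + ε * ‖x‖ := by
            refine add_le_add (ih x) (mul_le_mul_of_nonneg_left (hpow n x) hε.le)
        _ = (n + 1 : ℕ) * ε * ‖x‖ := by push_cast; ring
  set a := Q (((U ∘L P) ^ t) v)
  set b := Q (((U' ∘L P) ^ t) v)
  have ha : ‖a‖ ≤ 1 := by
    have := proj_norm_le Q hQ hQi (((U ∘L P) ^ t) v)
    have h2 : ∀ n : ℕ, ∀ x : H, ‖((U ∘L P) ^ n) x‖ ≤ ‖x‖ := by
      intro n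
      induction n with
      | zero => simp
      | succ n ih =>
        intro x
        rw [pow_succ, ContinuousLinearMap.mul_apply]
        exact le_trans (ih _) (hnUP x)
    calc ‖a‖ ≤ ‖((U ∘L P) ^ t) v‖ := this
      _ ≤ ‖v‖ := h2 t v
      _ = 1 := hv
  have hb : ‖b‖ ≤ 1 := by
    calc ‖b‖ ≤ ‖((U' ∘L P) ^ t) v‖ := proj_norm_le Q hQ hQi _
      _ ≤ ‖v‖ := hpow t v
      _ = 1 := hv
  have hab : ‖a - b‖ ≤ t * ε := by
    have : a - b = Q (((U ∘L P) ^ t) v - ((U' ∘L P) ^ t) v) := by simp [a, b, map_sub]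
    rw [this]
    calc ‖Q _‖ ≤ ‖((U ∘L P) ^ t) v - ((U' ∘L P) ^ t) v‖ := proj_norm_le Q hQ hQi _
      _ ≤ t * ε * ‖v‖ := key t v
      _ = t * ε := by rw [hv, mul_one]
  have hfactor : ‖a‖ ^ 2 - ‖b‖ ^ 2 = (‖a‖ - ‖b‖) * (‖a‖ + ‖b‖) := by ring
  have habs : |‖a‖ - ‖b‖| ≤ ‖a - b‖ := abs_norm_sub_norm_le a b
  rw [abs_le]
  constructor
  · nlinarith [norm_nonneg a, norm_nonneg b, abs_le.mp habs, norm_nonneg (a - b)]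
  · nlinarith [norm_nonneg a, norm_nonneg b, abs_le.mp habs, norm_nonneg (a - b)]
end

section
/- Let G be a deterministic branching program on n variables in which every node lies on a path from the start node where each variable is tested at most once (read-once), and suppose the function f computed by G is k-stable. Then G has at least 2^{k−1} nodes. -/
/-- A deterministic branching program on `n` Boolean variables:
nodes are `Fin size`; a node `v` is a sink labeled `b` iff `sinkVal v = some b`;
an interior node `v` is labeled by variable `var v` and has `b`-successor
`next v b`. -/
structure DetBP (n : ℕ) where
  size : ℕ
  start : Fin size
  sinkVal : Fin size → Option Bool
  var : Fin size → Fin n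
  next : Fin size → Bool → Fin size

namespace DetBP

variable {n : ℕ} (G : DetBP n)

/-- One computation step on input `a`. -/
def step (a : Fin n → Bool) (v : Fin G.size) : Fin G.size :=
  G.next v (a (G.var v))

/-- Evaluation with fuel: follow the computation path until a sink is reached. -/
def evalAux (a : Fin n → Bool) : ℕ → Fin G.size → Option Bool
  | 0, _ => none
  | (k + 1), v =>
    match G.sinkVal v with
    | some b => some b
    | none => evalAux a k (G.step a v)

/-- The output of `G` on input `a` (a branching program is acyclic, so `size`
steps of fuel suffice). -/
def eval (a : Fin n → Bool) : Option Bool :=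
  G.evalAux a G.size G.start

/-- There is an edge from `v` to `w` (for some Boolean edge label). -/
def Edge (v w : Fin G.size) : Prop :=
  G.sinkVal v = none ∧ ∃ b, G.next v b = w

/-- A list of nodes is a path of `G` if consecutive nodes are joined by edges. -/
def IsPath : List (Fin G.size) → Prop
  | [] => True
  | [_] => True
  | (v :: w :: rest) => G.Edge v w ∧ IsPath (w :: rest)

/-- `G` is read-once: on every path starting at the start node, each variable
labels at most one interior node. -/
def ReadOnce : Prop :=
  ∀ p : List (Fin G.size), G.IsPath p → p.head? = some G.start →
    ((p.filter (fun v => (G.sinkVal v).isNone)).map G.var).Nodup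

end DetBP

/-- `f` is `k`-stable: for every set `V` of `k` variables and every `x_i ∈ V`
there is an assignment to the variables outside `V` such that the induced
subfunction is `x_i` or its negation. -/
def kStable (n k : ℕ) (f : (Fin n → Bool) → Bool) : Prop :=
  ∀ V : Finset (Fin n), V.card = k → ∀ i ∈ V, ∃ ρ : Fin n → Bool,
    (∀ a : Fin n → Bool, (∀ j, j ∉ V → a j = ρ j) → f a = a i) ∨
    (∀ a : Fin n → Bool, (∀ j, j ∉ V → a j = ρ j) → f a = !(a i))

/- ============ auxiliary development ============ -/

namespace BPaux

variable {n : ℕ}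

/-- The node reached from the start after following answer bits `s 0, s 1, ...`. -/
def P (G : DetBP n) (s : ℕ → Bool) : ℕ → Fin G.size
  | 0 => G.start
  | t+1 => G.next (P G s t) (s t)

/-- The variable tested at the `t`-th node of the answer path. -/
def V (G : DetBP n) (s : ℕ → Bool) (t : ℕ) : Fin n := G.var (P G s t)

/-- The list of nodes visited from `v` on input `a` with fuel `m` (stopping at sinks). -/
def run (G : DetBP n) (a : Fin n → Bool) : ℕ → Fin G.size → List (Fin G.size)
  | 0, v => [v]
  | m+1, v => if (G.sinkVal v).isSome then [v] else v :: run G a m (G.step a v)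

lemma run_succ_some (G : DetBP n) {a : Fin n → Bool} {v : Fin G.size} {m : ℕ} {b : Bool}
    (h : G.sinkVal v = some b) : run G a (m+1) v = [v] := by
  simp [run, h]

lemma run_succ_none (G : DetBP n) {a : Fin n → Bool} {v : Fin G.size} {m : ℕ}
    (h : G.sinkVal v = none) : run G a (m+1) v = v :: run G a m (G.step a v) := by
  simp [run, h]

lemma run_cons (G : DetBP n) (a : Fin n → Bool) (m : ℕ) (v : Fin G.size) :
    ∃ l, run G a m v = v :: l := by
  cases m with
  | zero => exact ⟨[], rfl⟩
  | succ m =>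
    cases h : G.sinkVal v with
    | none => exact ⟨_, run_succ_none G h⟩
    | some b => exact ⟨[], run_succ_some G h⟩

lemma run_chain (G : DetBP n) (a : Fin n → Bool) :
    ∀ (m : ℕ) (v : Fin G.size), List.Chain' G.Edge (run G a m v) := by
  intro m
  induction m with
  | zero => intro v; simp [run, List.Chain']
  | succ m ih =>
    intro v
    cases h : G.sinkVal v with
    | some b => rw [run_succ_some G h]; simp [List.Chain']
    | none =>
      rw [run_succ_none G h]; simp only [List.Chain']; rw [List.isChain_cons]
      constructor
      · intro y hy
        obtain ⟨l, hl⟩ := run_cons G a m (G.step a v)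
        rw [hl] at hy
        simp at hy
        subst hy
        exact ⟨h, ⟨_, rfl⟩⟩
      · exact ih _

lemma evalAux_succ (G : DetBP n) (a : Fin n → Bool) (m : ℕ) (v : Fin G.size) :
    G.evalAux a (m+1) v = match G.sinkVal v with
      | some b => some b
      | none => G.evalAux a m (G.step a v) := rfl

lemma evalAux_succ_some (G : DetBP n) {a : Fin n → Bool} {m : ℕ} {v : Fin G.size} {b : Bool}
    (h : G.sinkVal v = some b) : G.evalAux a (m+1) v = some b := by
  rw [evalAux_succ, h]

lemma evalAux_succ_none (G : DetBP n) {a : Fin n → Bool} {m : ℕ} {v : Fin G.size}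
    (h : G.sinkVal v = none) : G.evalAux a (m+1) v = G.evalAux a m (G.step a v) := by
  rw [evalAux_succ, h]

lemma evalAux_sink (G : DetBP n) {a : Fin n → Bool} {m : ℕ} {v : Fin G.size} {b c : Bool}
    (h : G.sinkVal v = some b) (hc : G.evalAux a m v = some c) : c = b := by
  cases m with
  | zero => exact absurd hc (by simp [DetBP.evalAux])
  | succ m =>
    rw [evalAux_succ_some G h] at hc
    exact (Option.some_inj.mp hc).symm

lemma evalAux_unique (G : DetBP n) {a : Fin n → Bool} :
    ∀ (m₁ : ℕ) {m₂ : ℕ} {v : Fin G.size} {c₁ c₂ : Bool},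
      G.evalAux a m₁ v = some c₁ → G.evalAux a m₂ v = some c₂ → c₁ = c₂ := by
  intro m₁
  induction m₁ with
  | zero => intro m₂ v c₁ c₂ h1 _; exact absurd h1 (by simp [DetBP.evalAux])
  | succ m₁ ih =>
    intro m₂ v c₁ c₂ h1 h2
    cases h : G.sinkVal v with
    | some b =>
      rw [evalAux_sink G h h1, evalAux_sink G h h2]
    | none =>
      cases m₂ with
      | zero => exact absurd h2 (by simp [DetBP.evalAux])
      | succ m₂ =>
        rw [evalAux_succ_none G h] at h1 h2
        exact ih h1 h2

lemma evalAux_congr (G : DetBP n) {a a' : Fin n → Bool} :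
    ∀ (m : ℕ) (v : Fin G.size),
      (∀ u ∈ run G a m v, G.sinkVal u = none → a (G.var u) = a' (G.var u)) →
      G.evalAux a m v = G.evalAux a' m v := by
  intro m
  induction m with
  | zero => intro v _; rfl
  | succ m ih =>
    intro v hag
    cases h : G.sinkVal v with
    | some b => rw [evalAux_succ_some G h, evalAux_succ_some G h]
    | none =>
      have hmem : v ∈ run G a (m+1) v := by
        rw [run_succ_none G h]; exact List.mem_cons_self
      have hvv : a (G.var v) = a' (G.var v) := hag v hmem h
      rw [evalAux_succ_none G h, evalAux_succ_none G h]
      have hstep : G.step a v = G.step a' v := by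
        unfold DetBP.step; rw [hvv]
      rw [← hstep]
      exact ih (G.step a v)
        (fun u hu hus => hag u (by rw [run_succ_none G h]; exact List.mem_cons_of_mem _ hu) hus)

lemma reach (G : DetBP n) (s : ℕ → Bool) (a : Fin n → Bool) :
    ∀ (t : ℕ), (∀ m, m < t → G.sinkVal (P G s m) = none) →
      (∀ m, m < t → a (V G s m) = s m) →
      ∀ c, G.eval a = some c → ∃ m', G.evalAux a m' (P G s t) = some c := by
  intro t
  induction t with
  | zero => intro _ _ c hc; exact ⟨G.size, hc⟩
  | succ t ih =>
    intro hint hreal c hc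
    obtain ⟨m', hm'⟩ := ih (fun m hm => hint m (by omega)) (fun m hm => hreal m (by omega)) c hc
    have hi : G.sinkVal (P G s t) = none := hint t (by omega)
    cases m' with
    | zero => exact absurd hm' (by simp [DetBP.evalAux])
    | succ m' =>
      rw [evalAux_succ_none G hi] at hm'
      refine ⟨m', ?_⟩
      have hstep : G.step a (P G s t) = P G s (t+1) := by
        show G.next (P G s t) (a (V G s t)) = G.next (P G s t) (s t)
        rw [hreal t (by omega)]
      rwa [hstep] at hm'

lemma isPath_iff_chain' (G : DetBP n) : ∀ l : List (Fin G.size), G.IsPath l ↔ List.Chain' G.Edge l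
  | [] => by simp [DetBP.IsPath, List.Chain']
  | [v] => by simp [DetBP.IsPath, List.Chain']
  | (v :: w :: rest) => by
    have : G.IsPath (v :: w :: rest) ↔ (G.Edge v w ∧ G.IsPath (w :: rest)) := Iff.rfl
    rw [this, isPath_iff_chain' G (w :: rest)]; simp only [List.Chain']; exact List.isChain_cons_cons.symm

/-- Key read-once consequence: every continuation from the node reached after `t`
answer steps avoids all variables tested on that prefix; moreover the prefix vars
are distinct. -/
lemma avoid_of_prefix (G : DetBP n) (hro : G.ReadOnce) (s : ℕ → Bool) (t : ℕ) (ht : 0 < t)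
    (hint : ∀ m, m < t → G.sinkVal (P G s m) = none)
    (v : Fin G.size) (hv : P G s t = v) (a : Fin n → Bool) (m : ℕ) :
    (∀ u ∈ run G a m v, G.sinkVal u = none → ∀ m', m' < t → G.var u ≠ V G s m')
    ∧ ((List.range t).map (V G s)).Nodup := by
  obtain ⟨t', rfl⟩ : ∃ t', t = t' + 1 := ⟨t - 1, by omega⟩
  set l₁ : List (Fin G.size) := (List.range (t'+1)).map (P G s) with hl₁
  set l₂ := run G a m v with hl₂
  have hlast : l₁.getLast? = some (P G s t') := by
    rw [hl₁, List.range_succ, List.map_append]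
    exact List.getLast?_concat
  obtain ⟨l, hl⟩ := run_cons G a m v
  have hchain : List.Chain' G.Edge (l₁ ++ l₂) := by
    apply List.IsChain.append
    · rw [hl₁, List.isChain_map, List.isChain_range_succ]
      intro m' hm'
      exact ⟨hint m' (by omega), ⟨s m', rfl⟩⟩
    · exact run_chain G a m v
    · intro x hx y hy
      rw [hlast] at hx
      rw [hl₂, hl] at hy
      simp at hx hy
      subst hx; subst hy
      refine ⟨hint t' (by omega), ⟨s t', ?_⟩⟩
      rw [← hv]; rfl
  have hpath : G.IsPath (l₁ ++ l₂) := (isPath_iff_chain' G _).mpr hchain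
  have hhead : (l₁ ++ l₂).head? = some G.start := by
    rw [hl₁, List.range_succ_eq_map]
    rfl
  have hro' := hro _ hpath hhead
  rw [List.filter_append, List.map_append] at hro'
  have hfil : l₁.filter (fun u => (G.sinkVal u).isNone) = l₁ := by
    apply List.filter_eq_self.mpr
    intro u hu
    rw [hl₁] at hu
    simp only [List.mem_map, List.mem_range] at hu
    obtain ⟨m', hm', rfl⟩ := hu
    simp [hint m' hm']
  rw [hfil] at hro'
  have hmapvar : l₁.map G.var = (List.range (t'+1)).map (V G s) := by
    rw [hl₁, List.map_map]; rfl
  rw [hmapvar, List.nodup_append] at hro'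
  obtain ⟨hnd₁, _, hdisj⟩ := hro'
  refine ⟨?_, hnd₁⟩
  intro u hu hus m' hm' heq
  have h1 : V G s m' ∈ (List.range (t'+1)).map (V G s) := by
    simp only [List.mem_map, List.mem_range]
    exact ⟨m', hm', rfl⟩
  have h2 : V G s m' ∈ (l₂.filter (fun u => (G.sinkVal u).isNone)).map G.var := by
    simp only [List.mem_map]
    refine ⟨u, ?_, heq⟩
    rw [List.mem_filter]
    exact ⟨hu, by simp [hus]⟩
  exact hdisj _ h1 _ h2 rfl

/-- The partial assignment encoding the answers `s` along the prefix of length `t₀`. -/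
def encode (G : DetBP n) (s : ℕ → Bool) (t₀ : ℕ) (j : Fin n) : Bool :=
  if h : ∃ m, m < t₀ ∧ V G s m = j then s (Nat.find h) else false

lemma encode_spec (G : DetBP n) {s : ℕ → Bool} {t₀ : ℕ}
    (hinj : ∀ m₁ m₂, m₁ < t₀ → m₂ < t₀ → V G s m₁ = V G s m₂ → m₁ = m₂)
    {m : ℕ} (hm : m < t₀) : encode G s t₀ (V G s m) = s m := by
  have h : ∃ m', m' < t₀ ∧ V G s m' = V G s m := ⟨m, hm, rfl⟩
  rw [encode, dif_pos h]
  obtain ⟨h1, h2⟩ := Nat.find_spec h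
  rw [hinj _ _ h1 hm h2]

/-- Stability consequence: given any set `S` of at most `k` variables and two
assignments differing at some `i ∈ S`, there are total inputs extending them,
equal outside `S`, on which `f` differs. -/
lemma exists_neq {n k : ℕ} (hkn : k ≤ n) (f : (Fin n → Bool) → Bool) (hst : kStable n k f)
    (S : Finset (Fin n)) (hS : S.card ≤ k) (α β : Fin n → Bool) (i : Fin n)
    (hiS : i ∈ S) (hab : α i ≠ β i) :
    ∃ x y : Fin n → Bool, (∀ j ∈ S, x j = α j) ∧ (∀ j ∈ S, y j = β j) ∧
      (∀ j, j ∉ S → x j = y j) ∧ f x ≠ f y := by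
  obtain ⟨W, hSW, hW⟩ := Finset.exists_superset_card_eq hS (by simpa using hkn)
  obtain ⟨ρ, hρ⟩ := hst W hW i (hSW hiS)
  classical
  refine ⟨fun j => if j ∈ S then α j else ρ j, fun j => if j ∈ S then β j else ρ j,
    fun j hj => if_pos hj, fun j hj => if_pos hj, fun j hj => by simp [hj], ?_⟩
  have hx : ∀ j, j ∉ W → (fun j => if j ∈ S then α j else ρ j) j = ρ j :=
    fun j hj => if_neg (fun hjS => hj (hSW hjS))
  have hy : ∀ j, j ∉ W → (fun j => if j ∈ S then β j else ρ j) j = ρ j :=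
    fun j hj => if_neg (fun hjS => hj (hSW hjS))
  rcases hρ with h | h
  · rw [h _ hx, h _ hy]
    simpa [if_pos hiS] using hab
  · rw [h _ hx, h _ hy]
    simp only [if_pos hiS]
    cases hαi : α i <;> cases hβi : β i <;> simp_all


/-- No sink is reached within the first `k-1` answer steps. -/
lemma interiorAll {n k : ℕ} (hkn : k ≤ n) (G : DetBP n) (hro : G.ReadOnce)
    (f : (Fin n → Bool) → Bool) (hcomp : ∀ a, G.eval a = some (f a))
    (hst : kStable n k f) (s : ℕ → Bool) :
    ∀ t, t + 1 < k → G.sinkVal (P G s t) = none := by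
  intro t
  induction t using Nat.strong_induction_on with
  | _ t ih =>
    intro htk
    by_contra hsink
    obtain ⟨c, hc⟩ := Option.ne_none_iff_exists'.mp hsink
    have hint : ∀ m, m < t → G.sinkVal (P G s m) = none := fun m hm => ih m hm (by omega)
    have hnd : ((List.range t).map (V G s)).Nodup := by
      rcases Nat.eq_zero_or_pos t with h0 | hpos
      · subst h0; simp
      · exact (avoid_of_prefix G hro s t hpos hint _ rfl (fun _ => false) 0).2
    classical
    set T := ((List.range t).map (V G s)).toFinset with hT
    have hTcard : T.card = t := by
      rw [hT, List.toFinset_card_of_nodup hnd, List.length_map, List.length_range]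
    have hmemT : ∀ m, m < t → V G s m ∈ T := by
      intro m hm
      rw [hT, List.mem_toFinset]
      simp only [List.mem_map, List.mem_range]
      exact ⟨m, hm, rfl⟩
    have hex : ∃ i, i ∉ T := by
      by_contra h
      push_neg at h
      have : (Finset.univ : Finset (Fin n)).card ≤ T.card :=
        Finset.card_le_card (fun x _ => h x)
      rw [hTcard, Finset.card_univ, Fintype.card_fin] at this
      omega
    obtain ⟨i, hiT⟩ := hex
    set α := encode G s t with hα
    have hinj : ∀ m₁ m₂, m₁ < t → m₂ < t → V G s m₁ = V G s m₂ → m₁ = m₂ := by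
      intro m₁ m₂ h1 h2 he
      exact List.inj_on_of_nodup_map hnd (by simp [h1]) (by simp [h2]) he
    obtain ⟨x, y, hxS, hyS, _, hfxy⟩ := exists_neq hkn f hst (insert i T)
      (by rw [Finset.card_insert_of_notMem hiT, hTcard]; omega)
      α (Function.update α i (!(α i))) i (Finset.mem_insert_self i T)
      (by rw [Function.update_self]; cases α i <;> simp)
    have hxreal : ∀ m, m < t → x (V G s m) = s m := by
      intro m hm
      rw [hxS _ (Finset.mem_insert_of_mem (hmemT m hm)), hα]
      exact encode_spec G hinj hm
    have hyreal : ∀ m, m < t → y (V G s m) = s m := by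
      intro m hm
      have hne : V G s m ≠ i := fun he => hiT (he ▸ hmemT m hm)
      rw [hyS _ (Finset.mem_insert_of_mem (hmemT m hm)), Function.update_of_ne hne, hα]
      exact encode_spec G hinj hm
    obtain ⟨m₁, hm₁⟩ := reach G s x t hint hxreal (f x) (hcomp x)
    obtain ⟨m₂, hm₂⟩ := reach G s y t hint hyreal (f y) (hcomp y)
    exact hfxy ((evalAux_sink G hc hm₁).trans (evalAux_sink G hc hm₂).symm)

/-- If two answer-paths merge at `v`, inputs reaching `v` that agree off both
prefixes' variables get the same value of `f`. -/
lemma sameF_aux {n : ℕ} (G : DetBP n) (hro : G.ReadOnce)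
    (f : (Fin n → Bool) → Bool)
    {K : ℕ} (hKpos : 0 < K) (s s' : ℕ → Bool) (v : Fin G.size)
    (hints : ∀ m, m < K → G.sinkVal (P G s m) = none)
    (hints' : ∀ m, m < K → G.sinkVal (P G s' m) = none)
    (hv : P G s K = v) (hv' : P G s' K = v)
    (x y : Fin n → Bool)
    (hxv : ∃ m, G.evalAux x m v = some (f x)) (hyv : ∃ m, G.evalAux y m v = some (f y))
    (hagree : ∀ j : Fin n, (∀ m, m < K → j ≠ V G s m) → (∀ m, m < K → j ≠ V G s' m) →
      x j = y j) :
    f x = f y := by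
  obtain ⟨m₁, h₁⟩ := hxv
  obtain ⟨m₂, h₂⟩ := hyv
  have havoidA := (avoid_of_prefix G hro s K hKpos hints v hv x m₁).1
  have havoidB := (avoid_of_prefix G hro s' K hKpos hints' v hv' x m₁).1
  have hcg : G.evalAux x m₁ v = G.evalAux y m₁ v := by
    apply evalAux_congr
    intro u hu hus
    exact hagree (G.var u) (fun m' hm' => havoidA u hu hus m' hm')
      (fun m' hm' => havoidB u hu hus m' hm')
  rw [h₁] at hcg
  exact evalAux_unique G m₁ hcg.symm h₂
/-- If two answer-prefixes of length `K = k-1` merge at a node `v`, then every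
variable tested on the first prefix is also tested on the second. -/
lemma subset_aux {n k : ℕ} (hkn : k ≤ n) (G : DetBP n) (hro : G.ReadOnce)
    (f : (Fin n → Bool) → Bool) (hcomp : ∀ a, G.eval a = some (f a))
    (hst : kStable n k f) {K : ℕ} (hKk : K < k) (hKpos : 0 < K)
    (s s' : ℕ → Bool) (v : Fin G.size)
    (hints : ∀ m, m < K → G.sinkVal (P G s m) = none)
    (hints' : ∀ m, m < K → G.sinkVal (P G s' m) = none)
    (hv : P G s K = v) (hv' : P G s' K = v)
    (mw : ℕ) (hmw : mw < K) :
    ∃ m', m' < K ∧ V G s' m' = V G s mw := by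
  by_contra hno
  push_neg at hno
  classical
  have hndB : ((List.range K).map (V G s')).Nodup :=
    (avoid_of_prefix G hro s' K hKpos hints' v hv' (fun _ => false) 0).2
  have hinjB : ∀ m₁ m₂, m₁ < K → m₂ < K → V G s' m₁ = V G s' m₂ → m₁ = m₂ := by
    intro m₁ m₂ h1 h2 he
    exact List.inj_on_of_nodup_map hndB (by simp [h1]) (by simp [h2]) he
  set BF := ((List.range K).map (V G s')).toFinset with hBF
  have hmemBF : ∀ m, m < K → V G s' m ∈ BF := by
    intro m hm
    rw [hBF, List.mem_toFinset]
    simp only [List.mem_map, List.mem_range]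
    exact ⟨m, hm, rfl⟩
  have hBFcard : BF.card = K := by
    rw [hBF, List.toFinset_card_of_nodup hndB, List.length_map, List.length_range]
  have hwBF : V G s mw ∉ BF := by
    intro hmem
    rw [hBF, List.mem_toFinset] at hmem
    simp only [List.mem_map, List.mem_range] at hmem
    obtain ⟨m', hm', he⟩ := hmem
    exact hno m' hm' he
  set α := encode G s' K with hα
  obtain ⟨x, y, hxS, hyS, hxy, hfxy⟩ := exists_neq hkn f hst (insert (V G s mw) BF)
    (by rw [Finset.card_insert_of_notMem hwBF, hBFcard]; omega)
    α (Function.update α (V G s mw) (!(α (V G s mw)))) (V G s mw)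
    (Finset.mem_insert_self _ _)
    (by rw [Function.update_self]; cases α (V G s mw) <;> simp)
  have hxreal : ∀ m, m < K → x (V G s' m) = s' m := by
    intro m hm
    rw [hxS _ (Finset.mem_insert_of_mem (hmemBF m hm)), hα]
    exact encode_spec G hinjB hm
  have hyreal : ∀ m, m < K → y (V G s' m) = s' m := by
    intro m hm
    rw [hyS _ (Finset.mem_insert_of_mem (hmemBF m hm)),
      Function.update_of_ne (hno m hm), hα]
    exact encode_spec G hinjB hm
  obtain ⟨m₁, hm₁⟩ := reach G s' x K hints' hxreal (f x) (hcomp x)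
  obtain ⟨m₂, hm₂⟩ := reach G s' y K hints' hyreal (f y) (hcomp y)
  rw [hv'] at hm₁ hm₂
  apply hfxy
  apply sameF_aux G hro f hKpos s s' v hints hints' hv hv' x y ⟨m₁, hm₁⟩ ⟨m₂, hm₂⟩
  intro j hjs hjs'
  apply hxy
  intro hjmem
  rcases Finset.mem_insert.mp hjmem with h | h
  · exact hjs mw hmw h
  · rw [hBF, List.mem_toFinset] at h
    simp only [List.mem_map, List.mem_range] at h
    obtain ⟨m', hm', he⟩ := h
    exact hjs' m' hm' he.symm

end BPaux

/-- A read-once deterministic branching program computing a `k`-stable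
function has at least `2^(k-1)` nodes. -/
theorem stmt_14 (n k : ℕ) (hk : 1 ≤ k) (hkn : k ≤ n)
    (G : DetBP n) (hro : G.ReadOnce)
    (f : (Fin n → Bool) → Bool) (hcomp : ∀ a, G.eval a = some (f a))
    (hst : kStable n k f) :
    2 ^ (k - 1) ≤ G.size := by
  classical
  open BPaux in
  obtain ⟨K, rfl⟩ : ∃ K, k = K + 1 := ⟨k - 1, by omega⟩
  simp only [Nat.add_sub_cancel]
  rcases Nat.eq_zero_or_pos K with hK0 | hKpos
  · subst hK0
    simpa using Nat.succ_le_of_lt (Fin.pos G.start)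
  have hint : ∀ (s : ℕ → Bool) (t : ℕ), t < K → G.sinkVal (BPaux.P G s t) = none :=
    fun s t ht => BPaux.interiorAll hkn G hro f hcomp hst s t (by omega)
  set pad : (Fin K → Bool) → ℕ → Bool :=
    fun σ t => if h : t < K then σ ⟨t, h⟩ else false with hpad
  have hinj : Function.Injective (fun σ : Fin K → Bool => BPaux.P G (pad σ) K) := by
    intro σ σ' hvv
    set s := pad σ with hs
    set s' := pad σ' with hs'
    set v := BPaux.P G s K with hvdef
    have hv : BPaux.P G s K = v := rfl
    have hv' : BPaux.P G s' K = v := hvv.symm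
    -- step 1: both prefixes test the same variables
    have hsub : ∀ mw, mw < K → ∃ m', m' < K ∧ BPaux.V G s' m' = BPaux.V G s mw :=
      fun mw hmw => BPaux.subset_aux hkn G hro f hcomp hst (by omega) hKpos s s' v
        (hint s) (hint s') hv hv' mw hmw
    have hsub' : ∀ mw, mw < K → ∃ m', m' < K ∧ BPaux.V G s m' = BPaux.V G s' mw :=
      fun mw hmw => BPaux.subset_aux hkn G hro f hcomp hst (by omega) hKpos s' s v
        (hint s') (hint s) hv' hv mw hmw
    -- step 2: the answer strings agree
    have hall : ∀ m, m < K → s m = s' m := by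
      by_contra hvndiff
      push_neg at hvndiff
      have hex : ∃ m, m < K ∧ s m ≠ s' m := hvndiff
      have hexmin : ∃ m₀, (m₀ < K ∧ s m₀ ≠ s' m₀) ∧ ∀ j, j < m₀ → s j = s' j := by
        obtain ⟨h1, h2⟩ := Nat.find_spec hex
        refine ⟨Nat.find hex, ⟨h1, h2⟩, ?_⟩
        intro j hj
        by_contra hne
        exact Nat.find_min hex hj ⟨by omega, hne⟩
      obtain ⟨m₀, ⟨hm₀K, hm₀ne⟩, hprefix⟩ := hexmin
      have hPeq : ∀ j, j ≤ m₀ → BPaux.P G s j = BPaux.P G s' j := by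
        intro j
        induction j with
        | zero => intro _; rfl
        | succ j ihj =>
          intro hj
          show G.next (BPaux.P G s j) (s j) = G.next (BPaux.P G s' j) (s' j)
          rw [ihj (by omega), hprefix j (by omega)]
      have hieq : BPaux.V G s m₀ = BPaux.V G s' m₀ := by
        unfold BPaux.V
        rw [hPeq m₀ le_rfl]
      -- nodups / encodes
      have hndA : ((List.range K).map (BPaux.V G s)).Nodup :=
        (BPaux.avoid_of_prefix G hro s K hKpos (hint s) v hv (fun _ => false) 0).2
      have hndB : ((List.range K).map (BPaux.V G s')).Nodup :=
        (BPaux.avoid_of_prefix G hro s' K hKpos (hint s') v hv' (fun _ => false) 0).2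
      have hinjA : ∀ m₁ m₂, m₁ < K → m₂ < K → BPaux.V G s m₁ = BPaux.V G s m₂ → m₁ = m₂ := by
        intro m₁ m₂ h1 h2 he
        exact List.inj_on_of_nodup_map hndA (by simp [h1]) (by simp [h2]) he
      have hinjB : ∀ m₁ m₂, m₁ < K → m₂ < K → BPaux.V G s' m₁ = BPaux.V G s' m₂ → m₁ = m₂ := by
        intro m₁ m₂ h1 h2 he
        exact List.inj_on_of_nodup_map hndB (by simp [h1]) (by simp [h2]) he
      set AF := ((List.range K).map (BPaux.V G s)).toFinset with hAF
      have hmemAF : ∀ m, m < K → BPaux.V G s m ∈ AF := by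
        intro m hm
        rw [hAF, List.mem_toFinset]
        simp only [List.mem_map, List.mem_range]
        exact ⟨m, hm, rfl⟩
      have hmemAF' : ∀ m, m < K → BPaux.V G s' m ∈ AF := by
        intro m hm
        obtain ⟨m', hm', he⟩ := hsub' m hm
        exact he ▸ hmemAF m' hm'
      have hAFcard : AF.card = K := by
        rw [hAF, List.toFinset_card_of_nodup hndA, List.length_map, List.length_range]
      set α := BPaux.encode G s K with hα
      set β := BPaux.encode G s' K with hβ
      have hane : α (BPaux.V G s m₀) ≠ β (BPaux.V G s m₀) := by
        rw [hα, BPaux.encode_spec G hinjA hm₀K, hβ, hieq, BPaux.encode_spec G hinjB hm₀K]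
        exact hm₀ne
      obtain ⟨x, y, hxS, hyS, hxy, hfxy⟩ := BPaux.exists_neq hkn f hst AF
        (by omega) α β (BPaux.V G s m₀) (hmemAF m₀ hm₀K) hane
      have hxreal : ∀ m, m < K → x (BPaux.V G s m) = s m := by
        intro m hm
        rw [hxS _ (hmemAF m hm), hα]
        exact BPaux.encode_spec G hinjA hm
      have hyreal : ∀ m, m < K → y (BPaux.V G s' m) = s' m := by
        intro m hm
        rw [hyS _ (hmemAF' m hm), hβ]
        exact BPaux.encode_spec G hinjB hm
      obtain ⟨m₁, hm₁⟩ := BPaux.reach G s x K (hint s) hxreal (f x) (hcomp x)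
      obtain ⟨m₂, hm₂⟩ := BPaux.reach G s' y K (hint s') hyreal (f y) (hcomp y)
      rw [hv] at hm₁
      rw [hv'] at hm₂
      apply hfxy
      apply BPaux.sameF_aux G hro f hKpos s s' v (hint s) (hint s') hv hv' x y
        ⟨m₁, hm₁⟩ ⟨m₂, hm₂⟩
      intro j hjs _
      apply hxy
      intro hjmem
      rw [hAF, List.mem_toFinset] at hjmem
      simp only [List.mem_map, List.mem_range] at hjmem
      obtain ⟨m', hm', he⟩ := hjmem
      exact hjs m' hm' he.symm
    -- conclude σ = σ'
    funext tt
    have h1 : s tt.val = σ tt := by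
      rw [hs, hpad]
      simp only [tt.isLt, dif_pos]
    have h2 : s' tt.val = σ' tt := by
      rw [hs', hpad]
      simp only [tt.isLt, dif_pos]
    rw [← h1, ← h2]
    exact hall tt.val tt.isLt
  calc 2 ^ K = Fintype.card (Fin K → Bool) := by
        rw [Fintype.card_fun, Fintype.card_bool, Fintype.card_fin]
    _ ≤ Fintype.card (Fin G.size) := Fintype.card_le_of_injective _ hinj
    _ = G.size := Fintype.card_fin _
end

section
/- Let α be a real algebraic number and let f be a univariate integer polynomial with height ‖f‖ ≤ 2^d and deg(f) ≤ d such that f(α) ≠ 0. Then |f(α)| ≥ 2^{−O(d²)}, i.e., there is a constant c > 0 depending only on α such that |f(α)| ≥ 2^{−cd²} for all sufficiently large d. -/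
open Polynomial IntermediateField Finset

set_option maxHeartbeats 2000000

/-- For a real algebraic number `α` there is a constant `c > 0` such that, for
all sufficiently large `d`, every integer polynomial `f` of height at most
`2^d` and degree at most `d` with `f(α) ≠ 0` satisfies `|f(α)| ≥ 2^(-c d²)`. -/
theorem stmt_17 (α : ℝ) (hα : IsAlgebraic ℚ α) :
    ∃ c : ℝ, 0 < c ∧ ∃ d₀ : ℕ, ∀ d : ℕ, d₀ ≤ d →
      ∀ f : Polynomial ℤ,
        (∀ i, |f.coeff i| ≤ 2 ^ d) → f.natDegree ≤ d →
        Polynomial.aeval α f ≠ 0 →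
        (2 : ℝ) ^ (-(c * (d : ℝ) ^ 2)) ≤ |Polynomial.aeval α f| := by
  classical
  have hint : IsIntegral ℚ α := hα.isIntegral
  let K : IntermediateField ℚ ℝ := ℚ⟮α⟯
  haveI : FiniteDimensional ℚ K := adjoin.finiteDimensional hint
  let θ : K := AdjoinSimple.gen ℚ α
  have hθ : (algebraMap K ℝ) θ = α := AdjoinSimple.algebraMap_gen ℚ α
  have hθalg : IsAlgebraic ℤ θ :=
    (IsFractionRing.isAlgebraic_iff ℤ ℚ K).mpr (IsIntegral.isAlgebraic (IsIntegral.of_finite ℚ θ))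
  obtain ⟨x0, a, ha0, hax⟩ : ∃ (x : integralClosure ℤ K) (y : ℤ), y ≠ 0 ∧
      algebraMap ℤ K y * θ = x := by
    obtain ⟨y, hy, hyint⟩ := hθalg.exists_integral_multiple
    exact ⟨⟨_, hyint⟩, y, hy, by simp [Algebra.smul_def]⟩
  set β : K := algebraMap ℤ K a * θ with hβdef
  have hβ : IsIntegral ℤ β := by rw [hax]; exact x0.2
  -- embeddings
  let σ₀ : K →ₐ[ℚ] ℂ := (Complex.ofRealAm.restrictScalars ℚ).comp K.val
  set M : ℝ := 1 + ∑ σ : K →ₐ[ℚ] ℂ, ‖σ θ‖ with hMdef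
  have hM1 : (1:ℝ) ≤ M := by
    have : (0:ℝ) ≤ ∑ σ : K →ₐ[ℚ] ℂ, ‖σ θ‖ :=
      Finset.sum_nonneg fun σ _ => norm_nonneg _
    simp [hMdef]; linarith
  have hMσ : ∀ σ : K →ₐ[ℚ] ℂ, ‖σ θ‖ ≤ M := by
    intro σ
    have h1 : ‖σ θ‖ ≤ ∑ σ : K →ₐ[ℚ] ℂ, ‖σ θ‖ :=
      Finset.single_le_sum (f := fun σ : K →ₐ[ℚ] ℂ => ‖σ θ‖)
        (fun σ _ => norm_nonneg _) (mem_univ σ)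
    simp only [hMdef]; linarith
  clear_value M
  set A : ℝ := |(a:ℝ)| with hAdef
  have hA1 : (1:ℝ) ≤ A := by
    have := Int.one_le_abs ha0
    rw [hAdef, ← Int.cast_abs]; exact_mod_cast this
  clear_value A
  set n : ℕ := Module.finrank ℚ K with hndef
  set t : ℕ := Fintype.card (K →ₐ[ℚ] ℂ) with htdef
  clear_value n t
  obtain ⟨k, hk⟩ := pow_unbounded_of_one_lt (4 * A * M) (one_lt_two (α := ℝ))
  refine ⟨((k * (n + t) + 1 : ℕ) : ℝ), by positivity, 1, fun d hd f hcf hdf hf0 => ?_⟩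
  -- the element x = f(θ) in K
  set x : K := aeval θ f with hxdef
  have hx : (algebraMap K ℝ) x = aeval α f := by
    rw [hxdef, ← hθ]
    exact (aeval_algHom_apply ((K.val).restrictScalars ℤ) θ f).symm
  have hx0 : x ≠ 0 := fun h => hf0 (by rw [← hx, h, map_zero])
  set N : ℚ := Algebra.norm ℚ x with hNdef
  have hN0 : N ≠ 0 := Algebra.norm_ne_zero_iff.mpr hx0
  -- integrality of a^d * x
  set y : K := algebraMap ℤ K a ^ d * x with hydef
  have hyint : IsIntegral ℤ y := by
    have hexp : x = ∑ i ∈ range (d + 1), f.coeff i • θ ^ i :=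
      aeval_eq_sum_range' (lt_of_le_of_lt hdf (Nat.lt_succ_self d)) θ
    have hy2 : y = ∑ i ∈ range (d + 1), f.coeff i • (algebraMap ℤ K a ^ (d - i) * β ^ i) := by
      rw [hydef, hexp, Finset.mul_sum]
      refine Finset.sum_congr rfl fun i hi => ?_
      rw [Finset.mem_range, Nat.lt_succ_iff] at hi
      rw [hβdef, mul_pow, ← mul_assoc, ← pow_add, Nat.sub_add_cancel hi, mul_smul_comm]
    rw [hy2]
    have : (∑ i ∈ range (d + 1), f.coeff i • (algebraMap ℤ K a ^ (d - i) * β ^ i)) ∈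
        integralClosure ℤ K := by
      refine Subalgebra.sum_mem _ fun i _ => Subalgebra.zsmul_mem _ ?_ _
      exact Subalgebra.mul_mem _ (Subalgebra.pow_mem _ (Subalgebra.algebraMap_mem _ a) _)
        (Subalgebra.pow_mem _ hβ _)
    exact this
  have hy0 : y ≠ 0 := by
    rw [hydef]
    refine mul_ne_zero (pow_ne_zero _ ?_) hx0
    exact fun h => ha0 (RingHom.injective_int (algebraMap ℤ K) (by simpa using h))
  -- the norm of y is a nonzero rational integer
  have hNy : Algebra.norm ℚ y = (a:ℚ) ^ (d * n) * N := by
    have halg : (algebraMap ℤ K a) = algebraMap ℚ K ((a:ℚ)) := by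
      rw [IsScalarTower.algebraMap_apply ℤ ℚ K]
      norm_num
    rw [hydef, halg, ← map_pow, map_mul, Algebra.norm_algebraMap, ← pow_mul, hNdef, hndef]
  have hqint : IsIntegral ℤ (Algebra.norm ℚ y) := Algebra.isIntegral_norm ℚ hyint
  obtain ⟨m, hm⟩ := IsIntegrallyClosed.isIntegral_iff.mp hqint
  have hm0 : m ≠ 0 := by
    rintro rfl
    have h0 : Algebra.norm ℚ y = 0 := by rw [← hm]; simp
    exact Algebra.norm_ne_zero_iff.mpr hy0 h0
  have honele : (1:ℚ) ≤ |(a:ℚ)| ^ (d * n) * |N| := by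
    have h1 : (1:ℚ) ≤ |(m:ℚ)| := by exact_mod_cast Int.one_le_abs hm0
    calc (1:ℚ) ≤ |(m:ℚ)| := h1
    _ = |Algebra.norm ℚ y| := by rw [← hm]; rfl
    _ = |(a:ℚ)| ^ (d * n) * |N| := by rw [hNy, abs_mul, abs_pow]
  -- product over embeddings
  have hprod : |(N:ℝ)| = ∏ σ : K →ₐ[ℚ] ℂ, ‖σ x‖ := by
    have := Algebra.norm_eq_prod_embeddings ℚ ℂ x
    have h2 : ‖algebraMap ℚ ℂ N‖ = ∏ σ : K →ₐ[ℚ] ℂ, ‖σ x‖ := by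
      rw [hNdef, this]
      exact norm_prod Finset.univ (fun σ : K →ₐ[ℚ] ℂ => σ x)
    have h3 : (algebraMap ℚ ℂ) N = ((N:ℝ):ℂ) := by
      rw [IsScalarTower.algebraMap_apply ℚ ℝ ℂ]
      norm_num
    rw [← h2, h3, Complex.norm_real, Real.norm_eq_abs]
  -- sigma0 recovers |f(α)|
  set F : ℝ := |aeval α f| with hFdef
  clear_value F
  have hσ₀ : ‖σ₀ x‖ = F := by
    have : σ₀ x = ((algebraMap K ℝ x : ℝ) : ℂ) := rfl
    rw [this, Complex.norm_real, Real.norm_eq_abs, hx]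
    exact hFdef.symm
  -- bound each |σ x|
  set B : ℝ := (d + 1) * 2 ^ d * M ^ d with hBdef
  clear_value B
  have hB1 : (1:ℝ) ≤ B := by
    have : (1:ℝ) ≤ M ^ d := one_le_pow₀ hM1
    have h2 : (1:ℝ) ≤ (2:ℝ) ^ d := one_le_pow₀ one_le_two
    have h3 : (1:ℝ) ≤ (d:ℝ) + 1 := by
      have h4 : (0:ℝ) ≤ (d:ℝ) := Nat.cast_nonneg d
      linarith
    have h5 : (1:ℝ) * 1 ≤ (2:ℝ) ^ d * M ^ d :=
      mul_le_mul h2 this one_pos.le (by positivity)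
    rw [hBdef]
    nlinarith
  have hσB : ∀ σ : K →ₐ[ℚ] ℂ, ‖σ x‖ ≤ B := by
    intro σ
    have hev : σ x = aeval (σ θ) f := by
      have h := aeval_algHom_apply (σ.restrictScalars ℤ) θ f
      simpa using h.symm
    rw [hev, aeval_eq_sum_range' (lt_of_le_of_lt hdf (Nat.lt_succ_self d)) (σ θ)]
    refine le_trans (norm_sum_le _ _) ?_
    have hterm : ∀ i ∈ range (d + 1),
        ‖f.coeff i • (σ θ) ^ i‖ ≤ 2 ^ d * M ^ d := by
      intro i hi
      rw [Finset.mem_range, Nat.lt_succ_iff] at hi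
      rw [zsmul_eq_mul, norm_mul, norm_pow, Complex.norm_intCast]
      have h1 : |(f.coeff i : ℝ)| ≤ 2 ^ d := by
        rw [← Int.cast_abs]
        exact_mod_cast hcf i
      have h2 : ‖σ θ‖ ^ i ≤ M ^ d :=
        le_trans (pow_le_pow_left₀ (norm_nonneg _) (hMσ σ) i)
          (pow_le_pow_right₀ hM1 hi)
      have h3 : (0:ℝ) ≤ ‖σ θ‖ ^ i := pow_nonneg (norm_nonneg _) i
      exact mul_le_mul h1 h2 h3 (by positivity)
    calc ∑ i ∈ range (d+1), ‖f.coeff i • (σ θ) ^ i‖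
        ≤ ∑ _i ∈ range (d+1), (2:ℝ) ^ d * M ^ d := Finset.sum_le_sum hterm
      _ = (d + 1) * (2 ^ d * M ^ d) := by
          rw [Finset.sum_const, Finset.card_range]; push_cast; ring
      _ = B := by rw [hBdef]; ring
  -- split product
  have hFnonneg : (0:ℝ) ≤ F := by rw [hFdef]; exact abs_nonneg _
  have hsplit : ∏ σ : K →ₐ[ℚ] ℂ, ‖σ x‖
      = F * ∏ σ ∈ univ.erase σ₀, ‖σ x‖ := by
    rw [← hσ₀]
    exact (Finset.mul_prod_erase univ _ (mem_univ σ₀)).symm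
  have hP : ∏ σ ∈ univ.erase σ₀, ‖σ x‖ ≤ B ^ t := by
    have h1 : ∏ σ ∈ univ.erase σ₀, ‖σ x‖ ≤ ∏ _σ ∈ univ.erase σ₀, B :=
      Finset.prod_le_prod (fun σ _ => norm_nonneg _) (fun σ _ => hσB σ)
    rw [Finset.prod_const] at h1
    refine le_trans h1 (pow_le_pow_right₀ hB1 ?_)
    exact le_trans Finset.card_erase_le (le_of_eq (by rw [htdef, Finset.card_univ]))
  -- cast main inequality to ℝ
  have hRone : (1:ℝ) ≤ A ^ (d * n) * |(N:ℝ)| := by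
    have := honele
    have hcast : ((|(a:ℚ)| ^ (d*n) * |N| : ℚ) : ℝ) = A ^ (d*n) * |(N:ℝ)| := by
      push_cast [hAdef]; ring
    calc (1:ℝ) = ((1:ℚ):ℝ) := by norm_num
    _ ≤ ((|(a:ℚ)| ^ (d*n) * |N| : ℚ) : ℝ) := by exact_mod_cast this
    _ = A ^ (d*n) * |(N:ℝ)| := hcast
  -- combine
  have hPnonneg : (0:ℝ) ≤ ∏ σ ∈ univ.erase σ₀, ‖σ x‖ :=
    Finset.prod_nonneg fun σ _ => norm_nonneg _
  have hmain : (1:ℝ) ≤ F * (A ^ (d * n) * B ^ t) := by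
    have h1 : |(N:ℝ)| ≤ F * B ^ t := by
      rw [hprod, hsplit]
      exact mul_le_mul_of_nonneg_left hP hFnonneg
    have hApos : (0:ℝ) < A ^ (d*n) := pow_pos (lt_of_lt_of_le one_pos hA1) _
    nlinarith [hRone, mul_le_mul_of_nonneg_left h1 hApos.le]
  -- bound the denominator
  have hden : A ^ (d * n) * B ^ t ≤ (2:ℝ) ^ (k * (d * (n + t))) := by
    have hd1 : 1 ≤ d := hd
    have hdp : (d:ℝ) + 1 ≤ (2:ℝ) ^ d := by
      have := Nat.lt_two_pow_self (n := d)
      exact_mod_cast Nat.succ_le_of_lt this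
    have hBle : B ≤ (4 * M) ^ d := by
      rw [hBdef]
      have h1 : (d + 1 : ℝ) * 2 ^ d * M ^ d ≤ 2 ^ d * 2 ^ d * M ^ d := by
        have hMd : (0:ℝ) ≤ M ^ d := pow_nonneg (by linarith) d
        have h2d : (0:ℝ) ≤ (2:ℝ)^d := by positivity
        nlinarith
      calc (d + 1 : ℝ) * 2 ^ d * M ^ d ≤ 2 ^ d * 2 ^ d * M ^ d := h1
        _ = (4 * M) ^ d := by rw [mul_pow, ← mul_pow]; norm_num
    have hAM : A ≤ 4 * A * M := by nlinarith
    have h4M : 4 * M ≤ 4 * A * M := by nlinarith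
    have hA0 : (0:ℝ) ≤ A := by linarith
    have hB0 : (0:ℝ) ≤ B := by linarith
    have h4M0 : (0:ℝ) ≤ 4 * M := by linarith
    have h4AM0 : (0:ℝ) ≤ 4 * A * M := by nlinarith
    calc A ^ (d*n) * B ^ t
        ≤ (4*A*M) ^ (d*n) * ((4*M) ^ d) ^ t :=
          mul_le_mul (pow_le_pow_left₀ hA0 hAM _) (pow_le_pow_left₀ hB0 hBle t)
            (pow_nonneg hB0 t) (pow_nonneg h4AM0 _)
      _ = (4*A*M) ^ (d*n) * (4*M) ^ (d*t) := by rw [← pow_mul]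
      _ ≤ (4*A*M) ^ (d*n) * (4*A*M) ^ (d*t) :=
          mul_le_mul_of_nonneg_left (pow_le_pow_left₀ h4M0 h4M _) (pow_nonneg h4AM0 _)
      _ = (4*A*M) ^ (d*n + d*t) := by rw [← pow_add]
      _ ≤ ((2:ℝ) ^ k) ^ (d*n + d*t) := pow_le_pow_left₀ h4AM0 hk.le _
      _ = (2:ℝ) ^ (k * (d * (n+t))) := by rw [← pow_mul]; congr 1; ring
  -- finish with rpow manipulations
  have hFlb : ((2:ℝ) ^ (k * (d * (n + t))))⁻¹ ≤ F := by
    rw [inv_le_iff_one_le_mul₀ (by positivity)]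
    nlinarith [hmain, mul_le_mul_of_nonneg_left hden hFnonneg]
  refine le_trans ?_ hFlb
  rw [← Real.rpow_natCast (2:ℝ) (k * (d * (n+t))), ← Real.rpow_neg (by norm_num)]
  apply Real.rpow_le_rpow_of_exponent_le one_le_two
  rw [neg_le_neg_iff]
  push_cast
  have hd1 : (1:ℝ) ≤ (d:ℝ) := by exact_mod_cast hd
  have hd0 : (0:ℝ) ≤ (d:ℝ) := by positivity
  have hdd : (d:ℝ) ≤ (d:ℝ) * (d:ℝ) := le_mul_of_one_le_left hd0 hd1
  have hknt : (0:ℝ) ≤ (k:ℝ) * ((n:ℝ) + (t:ℝ)) := by positivity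
  nlinarith [mul_le_mul_of_nonneg_left hdd hknt, sq_nonneg (d:ℝ)]
end
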